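/- Playfair's Axiom (through a point not on a line passes at most one parallel) is equivalent to Euclid's Fifth Postulate (if a transversal falling on two lines makes the interior angles on one side sum to less than two right angles, the two lines meet on that side) in any Hilbert plane. -/
import Mathlib


/-- A Hilbert plane: a model of Hilbert's axioms of incidence, betweenness and
congruence for plane geometry (congruence rendered via a real-valued segment
length and angle measure). -/
structure HilbertPlane where
  Point : Type
  Line : Type
  onLine : Point → Line → Prop
  btw : Point → Point → Point → Prop
  dist : Point → Point → ℝ
  angle : Point → Point → Point → ℝ
  line_exists : ∀ P Q : Point, P ≠ Q → ∃ l : Line, onLine P l ∧ onLine Q l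
  line_unique : ∀ (P Q : Point) (l m : Line), P ≠ Q → onLine P l → onLine Q l →
    onLine P m → onLine Q m → l = m
  line_two_points : ∀ l : Line, ∃ P Q : Point, P ≠ Q ∧ onLine P l ∧ onLine Q l
  exists_noncollinear : ∃ P Q R : Point,
    ∀ l : Line, ¬ (onLine P l ∧ onLine Q l ∧ onLine R l)
  btw_symm : ∀ A B C, btw A B C → btw C B A
  btw_ne : ∀ A B C, btw A B C → A ≠ B ∧ B ≠ C ∧ A ≠ C
  btw_collinear : ∀ A B C, btw A B C → ∃ l, onLine A l ∧ onLine B l ∧ onLine C l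
  btw_extend : ∀ A B, A ≠ B → ∃ C, btw A B C
  btw_not_rotate : ∀ A B C, btw A B C → ¬ btw B A C
  pasch : ∀ (A B C : Point) (l : Line),
    (∀ m : Line, ¬ (onLine A m ∧ onLine B m ∧ onLine C m)) →
    ¬ onLine A l → ¬ onLine B l → ¬ onLine C l →
    (∃ P, onLine P l ∧ btw A P B) →
    (∃ Q, onLine Q l ∧ btw A Q C) ∨ (∃ Q, onLine Q l ∧ btw B Q C)
  dist_pos : ∀ A B, A ≠ B → 0 < dist A B
  dist_self : ∀ A, dist A A = 0
  dist_symm : ∀ A B, dist A B = dist B A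
  dist_btw_add : ∀ A B C, btw A B C → dist A B + dist B C = dist A C
  seg_construct : ∀ A B : Point, A ≠ B → ∀ r : ℝ, 0 < r →
    ∃ C, (C = B ∨ btw A C B ∨ btw A B C) ∧ dist A C = r
  angle_symm : ∀ A B C, angle A B C = angle C B A
  angle_mem : ∀ A B C, A ≠ B → C ≠ B → angle A B C ∈ Set.Icc (0:ℝ) Real.pi
  angle_pos : ∀ A B C, (∀ l, ¬ (onLine A l ∧ onLine B l ∧ onLine C l)) →
    0 < angle A B C
  angle_straight : ∀ A B C, btw A B C → angle A B C = Real.pi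
  angle_ray_invariant : ∀ A B C B' C' : Point,
    (B' = B ∨ btw A B' B ∨ btw A B B') →
    (C' = C ∨ btw A C' C ∨ btw A C C') →
    angle B A C = angle B' A C'
  angle_add : ∀ A B C D : Point, A ≠ B → A ≠ C → A ≠ D →
    (∀ l : Line, onLine A l → onLine B l →
      ¬ onLine D l ∧ ¬ onLine C l ∧ ¬ ∃ Z, onLine Z l ∧ btw D Z C) →
    (∀ l : Line, onLine A l → onLine C l →
      ¬ onLine D l ∧ ¬ onLine B l ∧ ¬ ∃ Z, onLine Z l ∧ btw D Z B) →
    angle B A D + angle D A C = angle B A C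
  angle_construct : ∀ θ : ℝ, 0 < θ → θ < Real.pi →
    ∀ (A B P : Point) (l : Line), A ≠ B → onLine A l → onLine B l → ¬ onLine P l →
    ∃ C, ¬ onLine C l ∧ (¬ ∃ Z, onLine Z l ∧ btw C Z P) ∧ angle C A B = θ
  sas : ∀ A B C A' B' C' : Point,
    (∀ l, ¬ (onLine A l ∧ onLine B l ∧ onLine C l)) →
    (∀ l, ¬ (onLine A' l ∧ onLine B' l ∧ onLine C' l)) →
    dist A B = dist A' B' → dist A C = dist A' C' →
    angle B A C = angle B' A' C' →
    dist B C = dist B' C' ∧ angle A B C = angle A' B' C' ∧ angle A C B = angle A' C' B'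

namespace HilbertPlane

variable (H : HilbertPlane)

/-- Three points are collinear. -/
def Collinear (A B C : H.Point) : Prop :=
  ∃ l : H.Line, H.onLine A l ∧ H.onLine B l ∧ H.onLine C l

/-- `X` and `Y` lie (strictly) on the same side of the line `l`. -/
def SameSide (l : H.Line) (X Y : H.Point) : Prop :=
  ¬ H.onLine X l ∧ ¬ H.onLine Y l ∧ ¬ ∃ Z, H.onLine Z l ∧ H.btw X Z Y

/-- `X` and `Y` lie on opposite sides of the line `l`. -/
def OppSide (l : H.Line) (X Y : H.Point) : Prop :=
  ¬ H.onLine X l ∧ ¬ H.onLine Y l ∧ ∃ Z, H.onLine Z l ∧ H.btw X Z Y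

/-- `X` lies on the ray from `A` through `B`. -/
def OnRay (A B X : H.Point) : Prop :=
  X = B ∨ H.btw A X B ∨ H.btw A B X

/-- The ray from `A` through `B` meets the line `a`. -/
def RayMeets (A B : H.Point) (a : H.Line) : Prop :=
  ∃ X, H.OnRay A B X ∧ H.onLine X a

/-- Two lines meet. -/
def LinesMeet (a b : H.Line) : Prop := ∃ X, H.onLine X a ∧ H.onLine X b

/-- `Q` is the foot of the perpendicular from `P` to the line `a`. -/
def FootPerp (P Q : H.Point) (a : H.Line) : Prop :=
  H.onLine Q a ∧ ∀ R, H.onLine R a → R ≠ Q → H.angle P Q R = Real.pi / 2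

/-- `D` lies strictly inside the angle `∠ X P Y`. -/
def InsideAngle (P X Y D : H.Point) : Prop :=
  (∀ l, H.onLine P l → H.onLine X l → H.SameSide l D Y) ∧
  (∀ l, H.onLine P l → H.onLine Y l → H.SameSide l D X)

/-- Lobachevsky's axiom: through any point outside a line there are two rays, not
on one line, not meeting the line, such that every ray inside the angle they form
meets the line. -/
def Lobachevsky : Prop :=
  ∀ (a : H.Line) (A : H.Point), ¬ H.onLine A a →
    ∃ B C : H.Point, ¬ H.Collinear B A C ∧
      ¬ H.RayMeets A B a ∧ ¬ H.RayMeets A C a ∧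
      ∀ D, H.InsideAngle A B C D → H.RayMeets A D a

/-- The ray from `P` through `B` is a limiting parallel ray to the line `a`,
where `Q` is the foot of the perpendicular from `P` to `a`: it does not meet `a`,
but every ray from `P` strictly inside the angle `∠ B P Q` meets `a`. -/
def LimitingParallelRay (a : H.Line) (P Q B : H.Point) : Prop :=
  H.FootPerp P Q a ∧ ¬ H.RayMeets P B a ∧
    ∀ D, H.InsideAngle P B Q D → H.RayMeets P D a

/-- The Archimedean axiom for segments. -/
def ArchimedeanAx : Prop :=
  ∀ A B C D : H.Point, A ≠ B → ∃ n : ℕ, H.dist C D < n * H.dist A B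

end HilbertPlane

namespace HilbertPlane

/-- Playfair's axiom: through a point not on a line passes at most one line not
meeting it. -/
def PlayfairAx (H : HilbertPlane) : Prop :=
  ∀ (l : H.Line) (A : H.Point), ¬ H.onLine A l →
    ∀ m n : H.Line, H.onLine A m → H.onLine A n →
      ¬ H.LinesMeet m l → ¬ H.LinesMeet n l → m = n

/-- Euclid's Fifth Postulate: if a transversal `c` falls on lines `a`, `b` at
`A`, `B` and makes the interior angles on one side (towards points `P ∈ a`,
`Q ∈ b` on the same side of `c`) sum to less than two right angles, then `a`
and `b` meet on that side. -/
def EuclidFifth (H : HilbertPlane) : Prop :=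
  ∀ (a b c : H.Line) (A B P Q : H.Point), A ≠ B →
    H.onLine A a → H.onLine A c → H.onLine B b → H.onLine B c →
    H.onLine P a → H.onLine Q b → H.SameSide c P Q →
    H.angle P A B + H.angle Q B A < Real.pi →
    ∃ X, H.onLine X a ∧ H.onLine X b ∧ H.SameSide c X P

end HilbertPlane
namespace HilbertPlane

variable {H : HilbertPlane}

lemma line_eq' {P Q : H.Point} {l m : H.Line} (h : P ≠ Q) (h1 : H.onLine P l)
    (h2 : H.onLine Q l) (h3 : H.onLine P m) (h4 : H.onLine Q m) : l = m :=
  H.line_unique P Q l m h h1 h2 h3 h4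

lemma eq_of_two_lines {l m : H.Line} (h : l ≠ m) {P Q : H.Point}
    (h1 : H.onLine P l) (h2 : H.onLine P m) (h3 : H.onLine Q l) (h4 : H.onLine Q m) :
    P = Q := by
  by_contra hne
  exact h (line_eq' hne h1 h3 h2 h4)

lemma exists_off_line (l : H.Line) : ∃ P, ¬ H.onLine P l := by
  obtain ⟨P, Q, R, h⟩ := H.exists_noncollinear
  by_cases hP : H.onLine P l
  · by_cases hQ : H.onLine Q l
    · by_cases hR : H.onLine R l
      · exact absurd ⟨hP, hQ, hR⟩ (h l)
      · exact ⟨R, hR⟩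
    · exact ⟨Q, hQ⟩
  · exact ⟨P, hP⟩

lemma btw_ne12 {A B C : H.Point} (h : H.btw A B C) : A ≠ B := (H.btw_ne A B C h).1
lemma btw_ne23 {A B C : H.Point} (h : H.btw A B C) : B ≠ C := (H.btw_ne A B C h).2.1
lemma btw_ne13 {A B C : H.Point} (h : H.btw A B C) : A ≠ C := (H.btw_ne A B C h).2.2

/-- `B` and `A` can't both be "between": metric argument. -/
lemma not_btw_perm1 {A B C : H.Point} (h : H.btw A B C) : ¬ H.btw B A C := by
  intro h'
  have e1 := H.dist_btw_add _ _ _ h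
  have e2 := H.dist_btw_add _ _ _ h'
  have hp := H.dist_pos A B (btw_ne12 h)
  have hs := H.dist_symm B A
  linarith

/-- `B` and `C` can't both be "between": metric argument. -/
lemma not_btw_perm2 {A B C : H.Point} (h : H.btw A B C) : ¬ H.btw A C B := by
  intro h'
  have e1 := H.dist_btw_add _ _ _ h
  have e2 := H.dist_btw_add _ _ _ h'
  have hp := H.dist_pos B C (btw_ne23 h)
  have hs := H.dist_symm C B
  linarith

/-- The middle point is on the line of the endpoints. -/
lemma onLine_mid {A B C : H.Point} {l : H.Line} (h : H.btw A B C)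
    (hA : H.onLine A l) (hC : H.onLine C l) : H.onLine B l := by
  obtain ⟨m, h1, h2, h3⟩ := H.btw_collinear A B C h
  rw [line_eq' (btw_ne13 h) hA hC h1 h3]
  exact h2

lemma onLine_right {A B C : H.Point} {l : H.Line} (h : H.btw A B C)
    (hA : H.onLine A l) (hB : H.onLine B l) : H.onLine C l := by
  obtain ⟨m, h1, h2, h3⟩ := H.btw_collinear A B C h
  rw [line_eq' (btw_ne12 h) hA hB h1 h2]
  exact h3

lemma onLine_left {A B C : H.Point} {l : H.Line} (h : H.btw A B C)
    (hB : H.onLine B l) (hC : H.onLine C l) : H.onLine A l := by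
  obtain ⟨m, h1, h2, h3⟩ := H.btw_collinear A B C h
  rw [line_eq' (btw_ne23 h) hB hC h2 h3]
  exact h1

/-- Hilbert's Theorem 4: of three distinct collinear points, one is between
the other two. -/
theorem btw_total {l : H.Line} {A B C : H.Point} (hA : H.onLine A l) (hB : H.onLine B l)
    (hC : H.onLine C l) (hAB : A ≠ B) (hBC : B ≠ C) (hAC : A ≠ C) :
    H.btw A B C ∨ H.btw B A C ∨ H.btw A C B := by
  by_contra hcon
  push_neg at hcon
  obtain ⟨h1, h2, h3⟩ := hcon
  obtain ⟨D, hD⟩ := exists_off_line l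
  have hAD : A ≠ D := fun h => hD (h ▸ hA)
  have hBD : B ≠ D := fun h => hD (h ▸ hB)
  have hCD : C ≠ D := fun h => hD (h ▸ hC)
  obtain ⟨lBD, hBlBD, hDlBD⟩ := H.line_exists B D hBD
  obtain ⟨lAD, hAlAD, hDlAD⟩ := H.line_exists A D hAD
  obtain ⟨lCD, hClCD, hDlCD⟩ := H.line_exists C D hCD
  have hlBD : l ≠ lBD := fun h => hD (h ▸ hDlBD)
  have hlAD : l ≠ lAD := fun h => hD (h ▸ hDlAD)
  have hlCD : l ≠ lCD := fun h => hD (h ▸ hDlCD)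
  have meetBD : ∀ X, H.onLine X l → H.onLine X lBD → X = B :=
    fun X u v => eq_of_two_lines hlBD u v hB hBlBD
  have meetAD : ∀ X, H.onLine X l → H.onLine X lAD → X = A :=
    fun X u v => eq_of_two_lines hlAD u v hA hAlAD
  have meetCD : ∀ X, H.onLine X l → H.onLine X lCD → X = C :=
    fun X u v => eq_of_two_lines hlCD u v hC hClCD
  have hABD : ¬ H.onLine A lBD := fun h => hAB (meetBD A hA h)
  have hCBD : ¬ H.onLine C lBD := fun h => hBC.symm (meetBD C hC h)
  have hBAD : ¬ H.onLine B lAD := fun h => hAB.symm (meetAD B hB h)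
  have hCAD : ¬ H.onLine C lAD := fun h => hAC.symm (meetAD C hC h)
  have hACD : ¬ H.onLine A lCD := fun h => hAC (meetCD A hA h)
  have hBCD : ¬ H.onLine B lCD := fun h => hBC (meetCD B hB h)
  have S1 : ¬ ∃ Z, H.onLine Z lBD ∧ H.btw A Z C := by
    rintro ⟨Z, hZ, hZb⟩
    exact h1 ((meetBD Z (onLine_mid hZb hA hC) hZ) ▸ hZb)
  have S2 : ¬ ∃ Z, H.onLine Z lAD ∧ H.btw B Z C := by
    rintro ⟨Z, hZ, hZb⟩
    exact h2 ((meetAD Z (onLine_mid hZb hB hC) hZ) ▸ hZb)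
  have S3 : ¬ ∃ Z, H.onLine Z lCD ∧ H.btw A Z B := by
    rintro ⟨Z, hZ, hZb⟩
    exact h3 ((meetCD Z (onLine_mid hZb hA hB) hZ) ▸ hZb)
  -- E with btw A D E
  obtain ⟨E, hE⟩ := H.btw_extend A D hAD
  have hDE : D ≠ E := btw_ne23 hE
  have hAE : A ≠ E := btw_ne13 hE
  have hElAD : H.onLine E lAD := onLine_right hE hAlAD hDlAD
  have hEl : ¬ H.onLine E l := fun h => hAE.symm (meetAD E h hElAD)
  have hElBD : ¬ H.onLine E lBD := by
    intro h
    have : lAD = lBD := line_eq' hDE hDlAD hElAD hDlBD h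
    exact hAB.symm (meetAD B hB (this ▸ hBlBD))
  have hElCD : ¬ H.onLine E lCD := by
    intro h
    have : lCD = lAD := line_eq' hDE hDlCD h hDlAD hElAD
    exact hCAD (this ▸ hClCD)
  -- Pasch 1 : triangle A E C with line lBD, crossing AE at D
  have pas1 := H.pasch A E C lBD
    (by rintro n ⟨u, v, w⟩; exact hCAD ((line_eq' hAE u v hAlAD hElAD) ▸ w))
    hABD hElBD hCBD ⟨D, hDlBD, hE⟩
  rcases pas1 with hcr | ⟨F, hFlBD, hEFC⟩
  · exact S1 hcr
  have hEFne : E ≠ F := btw_ne12 hEFC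
  have hFC : F ≠ C := btw_ne23 hEFC
  have hEC : E ≠ C := btw_ne13 hEFC
  obtain ⟨lEC, hElEC, hClEC⟩ := H.line_exists E C hEC
  have hFlEC : H.onLine F lEC := onLine_mid hEFC hElEC hClEC
  have hFD : F ≠ D := fun h => hCAD (onLine_right (h ▸ hEFC) hElAD hDlAD)
  have hFlAD : ¬ H.onLine F lAD := by
    intro h
    have heq : lAD = lBD := line_eq' hFD h hDlAD hFlBD hDlBD
    exact hAB.symm (meetAD B hB (heq ▸ hBlBD))
  have hFlCD : ¬ H.onLine F lCD := by
    intro h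
    have heq : lCD = lEC := line_eq' hFC h hClCD hFlEC hClEC
    exact hElCD (heq ▸ hElEC)
  -- Pasch 2 : triangle A E F with line lCD, crossing AE at D
  have pas2 := H.pasch A E F lCD
    (by rintro n ⟨u, v, w⟩; exact hFlAD ((line_eq' hAE u v hAlAD hElAD) ▸ w))
    hACD hElCD hFlCD ⟨D, hDlCD, hE⟩
  rcases pas2 with ⟨G, hGlCD, hAGF⟩ | ⟨Q, hQlCD, hEQF⟩
  swap
  · -- Q = C, contradiction with btw E F C
    have hQlEC : H.onLine Q lEC := onLine_mid hEQF hElEC hFlEC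
    have hlCDEC : lCD ≠ lEC := fun h => hElCD (h ▸ hElEC)
    have hQC : Q = C := eq_of_two_lines hlCDEC hQlCD hQlEC hClCD hClEC
    exact not_btw_perm2 hEFC (hQC ▸ hEQF)
  by_cases hFB : F = B
  · exact S3 ⟨G, hGlCD, hFB ▸ hAGF⟩
  -- Pasch 3 : triangle A F B with line lCD, crossing AF at G
  have hFl : ¬ H.onLine F l := fun h => hFB (meetBD F h hFlBD)
  have pas3 := H.pasch A F B lCD
    (by rintro n ⟨u, v, w⟩; exact hFl ((line_eq' hAB u w hA hB) ▸ v))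
    hACD hFlCD hBCD ⟨G, hGlCD, hAGF⟩
  rcases pas3 with hcr | ⟨Q, hQlCD, hFQB⟩
  · exact S3 hcr
  -- Q = D, giving btw F D B
  have hQlBD : H.onLine Q lBD := onLine_mid hFQB hFlBD hBlBD
  have hlCDBD : lCD ≠ lBD := fun h => hBCD (h ▸ hBlBD)
  have hQD : Q = D := eq_of_two_lines hlCDBD hQlCD hQlBD hDlCD hDlBD
  have hFDB : H.btw F D B := hQD ▸ hFQB
  -- Pasch 4 : triangle F B C with line lAD, crossing FB at D
  have pas4 := H.pasch F B C lAD
    (by rintro n ⟨u, v, w⟩; exact hFl ((line_eq' hBC v w hB hC) ▸ u))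
    hFlAD hBAD hCAD ⟨D, hDlAD, hFDB⟩
  rcases pas4 with ⟨Q', hQ'lAD, hFQ'C⟩ | hcr
  swap
  · exact S2 hcr
  -- Q' = E, contradiction with btw E F C
  have hQ'lEC : H.onLine Q' lEC := onLine_mid hFQ'C hFlEC hClEC
  have hlADEC : lAD ≠ lEC := fun h => hCAD (h ▸ hClEC)
  have hQ'E : Q' = E := eq_of_two_lines hlADEC hQ'lAD hQ'lEC hElAD hElEC
  exact not_btw_perm1 hEFC (hQ'E ▸ hFQ'C)

/-- Converse of the metric additivity: collinear + additive distances gives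
betweenness. -/
lemma btw_of_dist {l : H.Line} {A B C : H.Point} (hA : H.onLine A l) (hB : H.onLine B l)
    (hC : H.onLine C l) (hAB : A ≠ B) (hBC : B ≠ C) (hAC : A ≠ C)
    (h : H.dist A B + H.dist B C = H.dist A C) : H.btw A B C := by
  rcases btw_total hA hB hC hAB hBC hAC with h' | h' | h'
  · exact h'
  · exfalso
    have e := H.dist_btw_add _ _ _ h'
    have hp := H.dist_pos A B hAB
    have hs := H.dist_symm B A
    linarith
  · exfalso
    have e := H.dist_btw_add _ _ _ h'
    have hp := H.dist_pos B C hBC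
    have hs := H.dist_symm C B
    linarith

/-- There is a point strictly between two distinct points. -/
lemma exists_btw {A B : H.Point} (h : A ≠ B) : ∃ F, H.btw A F B := by
  have hp := H.dist_pos A B h
  obtain ⟨F, hray, hd⟩ := H.seg_construct A B h (H.dist A B / 2) (by linarith)
  rcases hray with rfl | h' | h'
  · exfalso; linarith
  · exact ⟨F, h'⟩
  · exfalso
    have e := H.dist_btw_add _ _ _ h'
    have hp2 := H.dist_pos B F (btw_ne23 h')
    linarith

/-- Core transfer lemma: if `m` meets `l` only at `C`, does not separate `A, B`,
and separates `A, D`, then it separates `B, D` (all on `l`), i.e. `btw B C D`. -/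
lemma btw_transfer {l m : H.Line} {A B D C : H.Point} (hlm : l ≠ m)
    (hCl : H.onLine C l) (hCm : H.onLine C m)
    (hAl : H.onLine A l) (hBl : H.onLine B l) (hDl : H.onLine D l)
    (hAm : ¬ H.onLine A m) (hBm : ¬ H.onLine B m) (hDm : ¬ H.onLine D m)
    (hAB : A ≠ B) (h1 : ¬ H.btw A C B) (h2 : H.btw A C D) : H.btw B C D := by
  have meet : ∀ X, H.onLine X l → H.onLine X m → X = C :=
    fun X u v => eq_of_two_lines hlm u v hCl hCm
  -- get a point E on m off l
  obtain ⟨P, Q, hPQ, hPm, hQm⟩ := H.line_two_points m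
  have hEex : ∃ E, H.onLine E m ∧ ¬ H.onLine E l := by
    by_cases hPl : H.onLine P l
    · refine ⟨Q, hQm, fun hQl => ?_⟩
      exact hPQ ((meet P hPl hPm).trans (meet Q hQl hQm).symm)
    · exact ⟨P, hPm, hPl⟩
  obtain ⟨E, hEm, hEl⟩ := hEex
  have hAE : A ≠ E := fun h => hEl (h ▸ hAl)
  obtain ⟨F, hF⟩ := exists_btw hAE
  obtain ⟨lAE, hAlAE, hElAE⟩ := H.line_exists A E hAE
  have hFlAE : H.onLine F lAE := onLine_mid hF hAlAE hElAE
  have hllAE : l ≠ lAE := fun h => hEl (h ▸ hElAE)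
  have hmlAE : m ≠ lAE := fun h => hAm (h ▸ hAlAE)
  have hAF : A ≠ F := btw_ne12 hF
  have hFE : F ≠ E := btw_ne23 hF
  have hFl : ¬ H.onLine F l := by
    intro h
    exact hAF (eq_of_two_lines hllAE h hFlAE hAl hAlAE).symm
  have hFm : ¬ H.onLine F m := by
    intro h
    exact hFE (eq_of_two_lines hmlAE h hFlAE hEm hElAE)
  -- no crossing of AB
  have nAB : ¬ ∃ Z, H.onLine Z m ∧ H.btw A Z B := by
    rintro ⟨Z, hZ, hZb⟩
    exact h1 ((meet Z (onLine_mid hZb hAl hBl) hZ) ▸ hZb)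
  -- no crossing of AF
  have nAF : ¬ ∃ Z, H.onLine Z m ∧ H.btw A Z F := by
    rintro ⟨Z, hZ, hZb⟩
    have hZlAE : H.onLine Z lAE := onLine_mid hZb hAlAE hFlAE
    have hmE : m ≠ lAE := hmlAE
    have hZE : Z = E := eq_of_two_lines hmE hZ hZlAE hEm hElAE
    exact not_btw_perm2 hF (hZE ▸ hZb)
  -- no crossing of BF
  have nBF : ¬ ∃ Z, H.onLine Z m ∧ H.btw B Z F := by
    rintro ⟨Z, hZ, hZb⟩
    have pas := H.pasch B F A m
      (by rintro n ⟨u, v, w⟩; exact hFl ((line_eq' hAB.symm u w hBl hAl) ▸ v))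
      hBm hFm hAm ⟨Z, hZ, hZb⟩
    rcases pas with ⟨W, hW, hWb⟩ | ⟨W, hW, hWb⟩
    · exact nAB ⟨W, hW, H.btw_symm _ _ _ hWb⟩
    · exact nAF ⟨W, hW, H.btw_symm _ _ _ hWb⟩
  have hAD : A ≠ D := btw_ne13 h2
  -- crossing of AD at C, transfer to FD
  have pasAD := H.pasch A D F m
    (by rintro n ⟨u, v, w⟩; exact hFl ((line_eq' hAD u v hAl hDl) ▸ w))
    hAm hDm hFm ⟨C, hCm, h2⟩
  rcases pasAD with ⟨W, hW, hWb⟩ | ⟨Z1, hZ1, hZ1b⟩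
  · exact absurd ⟨W, hW, hWb⟩ nAF
  -- crossing of DF, transfer to DB
  have hDB : D ≠ B := fun h => h1 (h ▸ h2)
  have pasDB := H.pasch D F B m
    (by rintro n ⟨u, v, w⟩; exact hFl ((line_eq' hDB u w hDl hBl) ▸ v))
    hDm hFm hBm ⟨Z1, hZ1, hZ1b⟩
  rcases pasDB with ⟨W, hW, hWb⟩ | ⟨W, hW, hWb⟩
  swap
  · exact absurd ⟨W, hW, H.btw_symm _ _ _ hWb⟩ nBF
  have hWC : W = C := meet W (onLine_mid hWb hDl hBl) hW
  exact H.btw_symm _ _ _ (hWC ▸ hWb)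

/-- 4-point order: A-B-C and A-C-D imply B-C-D and A-B-D. -/
lemma btw_trans_right {A B C D : H.Point} (h1 : H.btw A B C) (h2 : H.btw A C D) :
    H.btw B C D ∧ H.btw A B D := by
  obtain ⟨l, hAl, hBl, hCl⟩ := H.btw_collinear _ _ _ h1
  have hDl : H.onLine D l := onLine_right h2 hAl hCl
  obtain ⟨E, hEl⟩ := exists_off_line l
  have hCE : C ≠ E := fun h => hEl (h ▸ hCl)
  obtain ⟨m, hCm, hEm⟩ := H.line_exists C E hCE
  have hlm : l ≠ m := fun h => hEl (h ▸ hEm)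
  have meet : ∀ X, H.onLine X l → H.onLine X m → X = C :=
    fun X u v => eq_of_two_lines hlm u v hCl hCm
  have hBCD : H.btw B C D := by
    refine btw_transfer hlm hCl hCm hAl hBl hDl
      (fun h => (btw_ne13 h1) (meet A hAl h)) (fun h => (btw_ne23 h1) (meet B hBl h))
      (fun h => (btw_ne23 h2).symm (meet D hDl h)) (btw_ne12 h1)
      (not_btw_perm2 h1) h2
  refine ⟨hBCD, ?_⟩
  have e1 := H.dist_btw_add _ _ _ h1
  have e2 := H.dist_btw_add _ _ _ h2
  have e3 := H.dist_btw_add _ _ _ hBCD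
  have hBD : B ≠ D := fun h => (not_btw_perm2 h1) (h ▸ h2)
  exact btw_of_dist hAl hBl hDl (btw_ne12 h1) hBD (btw_ne13 h2) (by linarith)

/-- 4-point order: A-B-C and B-C-D imply A-C-D and A-B-D. -/
lemma btw_trans_left {A B C D : H.Point} (h1 : H.btw A B C) (h2 : H.btw B C D) :
    H.btw A C D ∧ H.btw A B D := by
  obtain ⟨l, hAl, hBl, hCl⟩ := H.btw_collinear _ _ _ h1
  have hDl : H.onLine D l := onLine_right h2 hBl hCl
  obtain ⟨E, hEl⟩ := exists_off_line l
  have hCE : C ≠ E := fun h => hEl (h ▸ hCl)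
  obtain ⟨m, hCm, hEm⟩ := H.line_exists C E hCE
  have hlm : l ≠ m := fun h => hEl (h ▸ hEm)
  have meet : ∀ X, H.onLine X l → H.onLine X m → X = C :=
    fun X u v => eq_of_two_lines hlm u v hCl hCm
  have hACD : H.btw A C D := by
    refine btw_transfer hlm hCl hCm hBl hAl hDl
      (fun h => (btw_ne23 h1) (meet B hBl h)) (fun h => (btw_ne13 h1) (meet A hAl h))
      (fun h => (btw_ne23 h2).symm (meet D hDl h)) (btw_ne12 h1).symm
      (fun h => (not_btw_perm2 h1) (H.btw_symm _ _ _ h)) h2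
  refine ⟨hACD, ?_⟩
  have e1 := H.dist_btw_add _ _ _ h1
  have e2 := H.dist_btw_add _ _ _ h2
  have e3 := H.dist_btw_add _ _ _ hACD
  exact btw_of_dist hAl hBl hDl (btw_ne12 h1) (btw_ne13 h2) (btw_ne13 hACD) (by linarith)

/-- Extend `B E` beyond `E` by a prescribed length. -/
lemma extend_dist {B E : H.Point} (h : B ≠ E) (r : ℝ) (hr : 0 < r) :
    ∃ F, H.btw B E F ∧ H.dist E F = r := by
  obtain ⟨G, hG⟩ := H.btw_extend B E h
  obtain ⟨F, hray, hd⟩ := H.seg_construct E G (btw_ne23 hG) r hr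
  refine ⟨F, ?_, hd⟩
  rcases hray with rfl | h' | h'
  · exact hG
  · exact H.btw_symm _ _ _
      (btw_trans_right (H.btw_symm _ _ _ h') (H.btw_symm _ _ _ hG)).1
  · exact (btw_trans_left hG h').2

/-- Midpoint of a segment. -/
lemma exists_midpoint {A B : H.Point} (h : A ≠ B) :
    ∃ M, H.btw A M B ∧ H.dist A M = H.dist A B / 2 ∧ H.dist M B = H.dist A B / 2 := by
  have hp := H.dist_pos A B h
  obtain ⟨M, hray, hd⟩ := H.seg_construct A B h (H.dist A B / 2) (by linarith)
  rcases hray with rfl | h' | h'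
  · exfalso; linarith
  · have e := H.dist_btw_add _ _ _ h'
    exact ⟨M, h', hd, by linarith⟩
  · exfalso
    have e := H.dist_btw_add _ _ _ h'
    have hp2 := H.dist_pos B M (btw_ne23 h')
    linarith

end HilbertPlane
namespace HilbertPlane

variable {H : HilbertPlane}

lemma sameSide_refl {l : H.Line} {X : H.Point} (hX : ¬ H.onLine X l) :
    H.SameSide l X X :=
  ⟨hX, hX, by rintro ⟨Z, _, hZb⟩; exact (btw_ne13 hZb) rfl⟩

lemma sameSide_symm {l : H.Line} {X Y : H.Point} (h : H.SameSide l X Y) :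
    H.SameSide l Y X :=
  ⟨h.2.1, h.1, by rintro ⟨Z, hZ, hZb⟩; exact h.2.2 ⟨Z, hZ, H.btw_symm _ _ _ hZb⟩⟩

lemma oppSide_symm {l : H.Line} {X Y : H.Point} (h : H.OppSide l X Y) :
    H.OppSide l Y X := by
  obtain ⟨hX, hY, Z, hZ, hZb⟩ := h
  exact ⟨hY, hX, Z, hZ, H.btw_symm _ _ _ hZb⟩

lemma side_cases {l : H.Line} {X Y : H.Point} (hX : ¬ H.onLine X l)
    (hY : ¬ H.onLine Y l) : H.SameSide l X Y ∨ H.OppSide l X Y := by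
  by_cases h : ∃ Z, H.onLine Z l ∧ H.btw X Z Y
  · exact Or.inr ⟨hX, hY, h⟩
  · exact Or.inl ⟨hX, hY, h⟩

lemma oppSide_of_btw {l : H.Line} {A X Y : H.Point} (hA : H.onLine A l)
    (hX : ¬ H.onLine X l) (hY : ¬ H.onLine Y l) (h : H.btw X A Y) :
    H.OppSide l X Y := ⟨hX, hY, A, hA, h⟩

lemma btw_of_oppSide {l m : H.Line} {A X Y : H.Point} (hlm : l ≠ m)
    (hAl : H.onLine A l) (hAm : H.onLine A m) (hXm : H.onLine X m)
    (hYm : H.onLine Y m) (h : H.OppSide l X Y) : H.btw X A Y := by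
  obtain ⟨hX, hY, Z, hZl, hZb⟩ := h
  have hZm : H.onLine Z m := onLine_mid hZb hXm hYm
  have : Z = A := eq_of_two_lines hlm hZl hZm hAl hAm
  exact this ▸ hZb

/-- A point strictly between a point of `l` and a point `D` off `l` is on the
same side as `D`. -/
lemma sameSide_of_btw_endpoint {l : H.Line} {C Z D : H.Point} (hC : H.onLine C l)
    (hD : ¬ H.onLine D l) (h : H.btw C Z D) : H.SameSide l Z D := by
  have hCD : C ≠ D := btw_ne13 h
  obtain ⟨m, hCm, hDm⟩ := H.line_exists C D hCD
  have hlm : l ≠ m := fun e => hD (e ▸ hDm)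
  have hZm : H.onLine Z m := onLine_mid h hCm hDm
  have hZl : ¬ H.onLine Z l := by
    intro hZ
    exact (btw_ne12 h).symm (eq_of_two_lines hlm hZ hZm hC hCm)
  refine ⟨hZl, hD, ?_⟩
  rintro ⟨W, hWl, hWb⟩
  have hWm : H.onLine W m := onLine_mid hWb hZm hDm
  have hWC : W = C := eq_of_two_lines hlm hWl hWm hC hCm
  exact not_btw_perm1 h (hWC ▸ hWb)

/-- If `l` meets segment `XZ` then it meets `XY` or `YZ`. -/
lemma seg_meet_cases {l : H.Line} {X Y Z : H.Point} (hX : ¬ H.onLine X l)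
    (hY : ¬ H.onLine Y l) (hZ : ¬ H.onLine Z l)
    (h : ∃ W, H.onLine W l ∧ H.btw X W Z) :
    (∃ W, H.onLine W l ∧ H.btw X W Y) ∨ (∃ W, H.onLine W l ∧ H.btw Y W Z) := by
  obtain ⟨W, hWl, hWb⟩ := h
  have hXZ : X ≠ Z := btw_ne13 hWb
  obtain ⟨m, hXm, hZm⟩ := H.line_exists X Z hXZ
  have hWm : H.onLine W m := onLine_mid hWb hXm hZm
  by_cases hYm : H.onLine Y m
  · -- collinear case
    by_cases hYX : Y = X
    · exact Or.inr ⟨W, hWl, hYX ▸ hWb⟩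
    by_cases hYZ : Y = Z
    · exact Or.inl ⟨W, hWl, hYZ ▸ hWb⟩
    have hWY : W ≠ Y := fun e => hY (e ▸ hWl)
    rcases btw_total hXm hWm hYm (btw_ne12 hWb) hWY (Ne.symm hYX) with h' | h' | h'
    · exact Or.inl ⟨W, hWl, h'⟩
    · exact Or.inr ⟨W, hWl,
        (btw_trans_left (H.btw_symm _ _ _ h') hWb).1⟩
    · exact Or.inr ⟨W, hWl, (btw_trans_right h' hWb).1⟩
  · -- Pasch
    have pas := H.pasch X Z Y l
      (by rintro n ⟨u, v, w⟩; exact hYm ((line_eq' hXZ u v hXm hZm) ▸ w))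
      hX hZ hY ⟨W, hWl, hWb⟩
    rcases pas with ⟨Q, hQ, hQb⟩ | ⟨Q, hQ, hQb⟩
    · exact Or.inl ⟨Q, hQ, hQb⟩
    · exact Or.inr ⟨Q, hQ, H.btw_symm _ _ _ hQb⟩

lemma sameSide_trans {l : H.Line} {X Y Z : H.Point} (h1 : H.SameSide l X Y)
    (h2 : H.SameSide l Y Z) : H.SameSide l X Z := by
  refine ⟨h1.1, h2.2.1, fun h => ?_⟩
  rcases seg_meet_cases h1.1 h1.2.1 h2.2.1 h with hc | hc
  · exact h1.2.2 hc
  · exact h2.2.2 hc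

lemma sameSide_oppSide_trans {l : H.Line} {X Y Z : H.Point} (h1 : H.SameSide l X Y)
    (h2 : H.OppSide l Y Z) : H.OppSide l X Z := by
  refine ⟨h1.1, h2.2.1, ?_⟩
  by_contra hn
  rcases seg_meet_cases h1.2.1 h1.1 h2.2.1 h2.2.2 with hc | hc
  · exact h1.2.2 (by obtain ⟨W, hW, hb⟩ := hc; exact ⟨W, hW, H.btw_symm _ _ _ hb⟩)
  · exact hn hc

/-- A line cannot cross all three sides of a triangle (helper). -/
private lemma no_triple_cross {l m : H.Line} {X Y Z P Q R : H.Point}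
    (hXm : H.onLine X m) (hZm : H.onLine Z m) (hYm : ¬ H.onLine Y m) (hXZ : X ≠ Z)
    (hPl : H.onLine P l) (hQl : H.onLine Q l)
    (hP : H.btw X P Y) (hQ : H.btw Y Q Z) (hR : H.btw X R Z) (hPRQ : H.btw P R Q) :
    False := by
  obtain ⟨n1, hXn1, hYn1⟩ := H.line_exists X Y (btw_ne13 hP)
  obtain ⟨n2, hYn2, hZn2⟩ := H.line_exists Y Z (btw_ne13 hQ)
  have hPn1 : H.onLine P n1 := onLine_mid hP hXn1 hYn1
  have hQn2 : H.onLine Q n2 := onLine_mid hQ hYn2 hZn2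
  have hRm : H.onLine R m := onLine_mid hR hXm hZm
  have hmn1 : m ≠ n1 := fun e => hYm (e ▸ hYn1)
  have hmn2 : m ≠ n2 := fun e => hYm (e ▸ hYn2)
  have hPm : ¬ H.onLine P m := fun h =>
    (btw_ne12 hP).symm (eq_of_two_lines hmn1 h hPn1 hXm hXn1)
  have hQm : ¬ H.onLine Q m := fun h =>
    (btw_ne23 hQ) (eq_of_two_lines hmn2 h hQn2 hZm hZn2)
  have hnoncol : ∀ n, ¬ (H.onLine P n ∧ H.onLine Q n ∧ H.onLine Y n) := by
    rintro n ⟨hPn, hQn, hYn⟩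
    have hPY : P ≠ Y := btw_ne23 hP
    have hn1 : n = n1 := line_eq' hPY hPn hYn hPn1 hYn1
    have hQn1 : H.onLine Q n1 := hn1 ▸ hQn
    have hQY : Q ≠ Y := (btw_ne12 hQ).symm
    have h12 : n1 = n2 := line_eq' hQY hQn1 (hn1 ▸ hYn) hQn2 hYn2
    have hZn1 : H.onLine Z n1 := h12 ▸ hZn2
    have : m = n1 := line_eq' hXZ hXm hZm hXn1 hZn1
    exact hYm (this ▸ hYn1)
  have pas := H.pasch P Q Y m hnoncol hPm hQm hYm ⟨R, hRm, hPRQ⟩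
  rcases pas with ⟨S, hSm, hSb⟩ | ⟨S, hSm, hSb⟩
  · have hSn1 : H.onLine S n1 := onLine_mid hSb hPn1 hYn1
    have hSX : S = X := eq_of_two_lines hmn1 hSm hSn1 hXm hXn1
    exact not_btw_perm1 hP (hSX ▸ hSb)
  · have hSn2 : H.onLine S n2 := onLine_mid hSb hQn2 hYn2
    have hSZ : S = Z := eq_of_two_lines hmn2 hSm hSn2 hZm hZn2
    exact not_btw_perm2 hQ (H.btw_symm _ _ _ (hSZ ▸ hSb))

lemma oppSide_trans {l : H.Line} {X Y Z : H.Point} (h1 : H.OppSide l X Y)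
    (h2 : H.OppSide l Y Z) : H.SameSide l X Z := by
  obtain ⟨hX, hY, P, hPl, hPb⟩ := h1
  obtain ⟨_, hZ, Q, hQl, hQb⟩ := h2
  refine ⟨hX, hZ, ?_⟩
  rintro ⟨R, hRl, hRb⟩
  have hXZ : X ≠ Z := btw_ne13 hRb
  obtain ⟨m, hXm, hZm⟩ := H.line_exists X Z hXZ
  have hRm : H.onLine R m := onLine_mid hRb hXm hZm
  have hlm : l ≠ m := fun e => hX (e ▸ hXm)
  by_cases hYm : H.onLine Y m
  · -- collinear case: P = Q = R forced
    have hPm : H.onLine P m := onLine_mid hPb hXm hYm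
    have hQm : H.onLine Q m := onLine_mid hQb hYm hZm
    have hPR : P = R := eq_of_two_lines hlm hPl hPm hRl hRm
    have hQR : Q = R := eq_of_two_lines hlm hQl hQm hRl hRm
    rw [hPR] at hPb
    rw [hQR] at hQb
    have e1 := H.dist_btw_add _ _ _ hPb
    have e2 := H.dist_btw_add _ _ _ hQb
    have e3 := H.dist_btw_add _ _ _ hRb
    have hXY : X ≠ Y := btw_ne13 hPb
    have hYZ : Y ≠ Z := btw_ne13 hQb
    have hpy := H.dist_pos R Y (fun e => hY (e ▸ hRl))
    have hpx := H.dist_pos X R (btw_ne12 hPb)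
    have hpz := H.dist_pos R Z (btw_ne23 hRb)
    have s1 := H.dist_symm Y R
    have s2 := H.dist_symm R Y
    rcases btw_total hXm hYm hZm hXY hYZ hXZ with h' | h' | h'
    · have e4 := H.dist_btw_add _ _ _ h'; linarith
    · have e4 := H.dist_btw_add _ _ _ h'
      have s3 := H.dist_symm Y X
      have s4 := H.dist_symm X R
      linarith
    · have e4 := H.dist_btw_add _ _ _ h'
      have s5 := H.dist_symm Z Y
      have s6 := H.dist_symm Z R
      linarith
  · -- noncollinear case
    have hPR : P ≠ R := by
      intro e
      subst e
      obtain ⟨n1, hXn1, hYn1⟩ := H.line_exists X Y (btw_ne13 hPb)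
      have hPn1 : H.onLine P n1 := onLine_mid hPb hXn1 hYn1
      have hmn1 : m ≠ n1 := fun e => hYm (e ▸ hYn1)
      exact hX ((eq_of_two_lines hmn1 hRm hPn1 hXm hXn1) ▸ hPl)
    have hQR : Q ≠ R := by
      intro e
      subst e
      obtain ⟨n2, hYn2, hZn2⟩ := H.line_exists Y Z (btw_ne13 hQb)
      have hQn2 : H.onLine Q n2 := onLine_mid hQb hYn2 hZn2
      have hmn2 : m ≠ n2 := fun e => hYm (e ▸ hYn2)
      exact hZ ((eq_of_two_lines hmn2 hRm hQn2 hZm hZn2) ▸ hQl)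
    have hPQ : P ≠ Q := by
      intro e
      subst e
      obtain ⟨n1, hXn1, hYn1⟩ := H.line_exists X Y (btw_ne13 hPb)
      obtain ⟨n2, hYn2, hZn2⟩ := H.line_exists Y Z (btw_ne13 hQb)
      have hPn1 : H.onLine P n1 := onLine_mid hPb hXn1 hYn1
      have hPn2 : H.onLine P n2 := onLine_mid hQb hYn2 hZn2
      have hn12 : n1 ≠ n2 := by
        intro e
        have : m = n1 := line_eq' (btw_ne13 hRb) hXm hZm hXn1 (e ▸ hZn2)
        exact hYm (this ▸ hYn1)
      exact hY ((eq_of_two_lines hn12 hPn1 hPn2 hYn1 hYn2) ▸ hPl)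
    rcases btw_total hPl hRl hQl hPR hQR.symm hPQ with h' | h' | h'
    · exact no_triple_cross hXm hZm hYm hXZ hPl hQl hPb hQb hRb h'
    · -- P is the middle crossing: permute (X, Z, Y)
      obtain ⟨n1, hXn1, hYn1⟩ := H.line_exists X Y (btw_ne13 hPb)
      have hZn1 : ¬ H.onLine Z n1 := by
        intro hc
        exact hYm ((line_eq' hXZ hXn1 hc hXm hZm) ▸ hYn1)
      exact no_triple_cross hXn1 hYn1 hZn1 (btw_ne13 hPb) hRl hQl hRb
        (H.btw_symm _ _ _ hQb) hPb h'
    · -- Q is the middle crossing: permute (Y, Z, X)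
      obtain ⟨n2, hYn2, hZn2⟩ := H.line_exists Y Z (btw_ne13 hQb)
      have hXn2 : ¬ H.onLine X n2 := by
        intro hc
        exact hYm ((line_eq' hXZ hc hZn2 hXm hZm) ▸ hYn2)
      exact no_triple_cross hYn2 hZn2 hXn2 (btw_ne13 hQb) hPl hRl
        (H.btw_symm _ _ _ hPb) hRb hQb h'

/-- Points on a ray from a point of `l` are on the same side of `l`. -/
lemma sameSide_of_onRay {l : H.Line} {A B X : H.Point} (hA : H.onLine A l)
    (hB : ¬ H.onLine B l) (hX : ¬ H.onLine X l) (h : H.OnRay A B X) :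
    H.SameSide l B X := by
  refine ⟨hB, hX, ?_⟩
  rintro ⟨Z, hZl, hZb⟩
  rcases h with rfl | hr | hr
  · exact (btw_ne13 hZb) rfl
  · have hAB : A ≠ B := fun e => hB (e ▸ hA)
    obtain ⟨m, hAm, hBm⟩ := H.line_exists A B hAB
    have hXm : H.onLine X m := onLine_mid hr hAm hBm
    have hZm : H.onLine Z m := onLine_mid hZb hBm hXm
    have hlm : l ≠ m := fun e => hB (e ▸ hBm)
    have hZA : Z = A := eq_of_two_lines hlm hZl hZm hA hAm
    exact not_btw_perm2 ((hZA ▸ hZb : H.btw B A X)) (H.btw_symm _ _ _ hr)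
  · have hAB : A ≠ B := fun e => hB (e ▸ hA)
    obtain ⟨m, hAm, hBm⟩ := H.line_exists A B hAB
    have hXm : H.onLine X m := onLine_right hr hAm hBm
    have hZm : H.onLine Z m := onLine_mid hZb hBm hXm
    have hlm : l ≠ m := fun e => hB (e ▸ hBm)
    have hZA : Z = A := eq_of_two_lines hlm hZl hZm hA hAm
    exact not_btw_perm1 hr (hZA ▸ hZb)

/-- A point of the line `AB` on the same side of `l` as `B` (where `l` meets
`AB` exactly at `A`) lies on the ray `AB`. -/
lemma onRay_of_sameSide {l m : H.Line} {A B X : H.Point} (hlm : l ≠ m)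
    (hAl : H.onLine A l) (hAm : H.onLine A m) (hBm : H.onLine B m)
    (hXm : H.onLine X m) (h : H.SameSide l B X) : H.OnRay A B X := by
  obtain ⟨hB, hX, hno⟩ := h
  by_cases hXB : X = B
  · exact Or.inl hXB
  have hBA : B ≠ A := fun e => hB (e ▸ hAl)
  have hXA : X ≠ A := fun e => hX (e ▸ hAl)
  rcases btw_total hBm hAm hXm hBA hXA.symm (Ne.symm hXB) with h' | h' | h'
  · exact absurd ⟨A, hAl, h'⟩ hno
  · exact Or.inr (Or.inr h')
  · exact Or.inr (Or.inl (H.btw_symm _ _ _ h'))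

lemma onLine_of_onRay {A B X : H.Point} {m : H.Line} (h : H.OnRay A B X)
    (hA : H.onLine A m) (hB : H.onLine B m) : H.onLine X m := by
  rcases h with rfl | h' | h'
  · exact hB
  · exact onLine_mid h' hA hB
  · exact onLine_right h' hA hB

/-- Angles only depend on rays. -/
lemma angle_ray_left {A B C B' : H.Point} (h : H.OnRay A B B') :
    H.angle B A C = H.angle B' A C :=
  H.angle_ray_invariant A B C B' C h (Or.inl rfl)

lemma angle_ray_right {A B C C' : H.Point} (h : H.OnRay A C C') :
    H.angle B A C = H.angle B A C' :=
  H.angle_ray_invariant A B C B C' (Or.inl rfl) h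

end HilbertPlane
namespace HilbertPlane

variable {H : HilbertPlane}

/-- Key swap lemma: with `B, A, C` on `l` (`A` between), `D, E` on the same side
of `l`, and `E` on the `B`-side of line `AD`, the points `D` and `C` are on the
same side of line `AE`. -/
private lemma side_swap {l lAD lAE : H.Line} {A B C D E : H.Point}
    (hBl : H.onLine B l) (hAl : H.onLine A l) (hCl : H.onLine C l)
    (hBAC : H.btw B A C) (hD : ¬ H.onLine D l) (hE : ¬ H.onLine E l)
    (hDE : H.SameSide l D E)
    (hAlAD : H.onLine A lAD) (hDlAD : H.onLine D lAD)
    (hAlAE : H.onLine A lAE) (hElAE : H.onLine E lAE)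
    (hElAD : ¬ H.onLine E lAD)
    (hEB : H.SameSide lAD E B) : H.SameSide lAE D C := by
  have hAB : A ≠ B := (btw_ne12 hBAC).symm
  have hAC : A ≠ C := btw_ne23 hBAC
  have hAD : A ≠ D := fun e => hD (e ▸ hAl)
  have hllAE : l ≠ lAE := fun e => hE (e ▸ hElAE)
  have hlADlAE : lAD ≠ lAE := fun e => hElAD (e ▸ hElAE)
  have hBlAE : ¬ H.onLine B lAE := fun h => hE ((line_eq' hAB hAlAE h hAl hBl) ▸ hElAE)
  have hClAE : ¬ H.onLine C lAE := fun h => hE ((line_eq' hAC hAlAE h hAl hCl) ▸ hElAE)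
  have hDlAE : ¬ H.onLine D lAE := fun h =>
    hElAD ((line_eq' hAD hAlAE h hAlAD hDlAD) ▸ hElAE)
  have hBlAD : ¬ H.onLine B lAD := fun h => hD ((line_eq' hAB hAlAD h hAl hBl) ▸ hDlAD)
  have hClAD : ¬ H.onLine C lAD := fun h => hD ((line_eq' hAC hAlAD h hAl hCl) ▸ hDlAD)
  have oppBC_AE : H.OppSide lAE B C := oppSide_of_btw hAlAE hBlAE hClAE hBAC
  have oppBC_AD : H.OppSide lAD B C := oppSide_of_btw hAlAD hBlAD hClAD hBAC
  have pas := H.pasch B C D lAE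
    (by rintro n ⟨u, v, w⟩; exact hD ((line_eq' (btw_ne13 hBAC) u v hBl hCl) ▸ w))
    hBlAE hClAE hDlAE ⟨A, hAlAE, hBAC⟩
  rcases pas with ⟨Z, hZ, hbZ⟩ | ⟨Z, hZ, hbZ⟩
  · exact oppSide_trans (oppSide_symm ⟨hBlAE, hDlAE, Z, hZ, hbZ⟩) oppBC_AE
  · exfalso
    have hZD : H.SameSide l Z D := sameSide_of_btw_endpoint hCl hD hbZ
    have hZl : ¬ H.onLine Z l := hZD.1
    have hZA : Z ≠ A := fun e => hZl (e ▸ hAl)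
    have hZE : H.SameSide l E Z :=
      sameSide_trans (sameSide_symm hDE) (sameSide_symm hZD)
    have ray : H.OnRay A E Z := onRay_of_sameSide hllAE hAl hAlAE hElAE hZ hZE
    have hZlAD : ¬ H.onLine Z lAD := fun h =>
      hlADlAE (line_eq' hZA h hAlAD hZ hAlAE)
    have hZEside : H.SameSide lAD E Z := sameSide_of_onRay hAlAD hElAD hZlAD ray
    have hZC : H.SameSide lAD Z C :=
      sameSide_of_btw_endpoint hDlAD hClAD (H.btw_symm _ _ _ hbZ)
    have hZB : H.SameSide lAD Z B := sameSide_trans (sameSide_symm hZEside) hEB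
    exact (sameSide_trans (sameSide_symm hZB) hZC).2.2 oppBC_AD.2.2

/-- The sum of the angles a ray makes with the two halves of a line through its
vertex is the same for all rays on a given side. -/
private lemma angle_sum_const {l : H.Line} {B A C D E : H.Point}
    (hBl : H.onLine B l) (hAl : H.onLine A l) (hCl : H.onLine C l)
    (hBAC : H.btw B A C) (hD : ¬ H.onLine D l) (hE : ¬ H.onLine E l)
    (hDE : H.SameSide l D E) :
    H.angle B A D + H.angle D A C = H.angle B A E + H.angle E A C := by
  have hAB : A ≠ B := (btw_ne12 hBAC).symm
  have hAC : A ≠ C := btw_ne23 hBAC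
  have hAD : A ≠ D := fun e => hD (e ▸ hAl)
  have hAE : A ≠ E := fun e => hE (e ▸ hAl)
  obtain ⟨lAD, hAlAD, hDlAD⟩ := H.line_exists A D hAD
  obtain ⟨lAE, hAlAE, hElAE⟩ := H.line_exists A E hAE
  have hllAD : l ≠ lAD := fun e => hD (e ▸ hDlAD)
  have hBlAD : ¬ H.onLine B lAD := fun h => hD ((line_eq' hAB hAlAD h hAl hBl) ▸ hDlAD)
  have hClAD : ¬ H.onLine C lAD := fun h => hD ((line_eq' hAC hAlAD h hAl hCl) ▸ hDlAD)
  by_cases hElAD : H.onLine E lAD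
  · have ray : H.OnRay A D E := onRay_of_sameSide hllAD hAl hAlAD hDlAD hElAD hDE
    rw [angle_ray_right (B := B) ray, H.angle_symm D A C, H.angle_symm E A C,
      angle_ray_right (B := C) ray]
  · rcases side_cases hElAD hBlAD with hEB | hEB
    · have hDC : H.SameSide lAE D C :=
        side_swap hBl hAl hCl hBAC hD hE hDE hAlAD hDlAD hAlAE hElAE hElAD hEB
      have add1 : H.angle B A E + H.angle E A D = H.angle B A D := by
        refine H.angle_add A B D E hAB hAD hAE ?_ ?_
        · intro n hAn hBn
          have hnl : n = l := line_eq' hAB hAn hBn hAl hBl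
          subst hnl
          exact ⟨hE, hD, fun ⟨Z, hZ, hb⟩ => hDE.2.2 ⟨Z, hZ, H.btw_symm _ _ _ hb⟩⟩
        · intro n hAn hDn
          have hnl : n = lAD := line_eq' hAD hAn hDn hAlAD hDlAD
          subst hnl
          exact ⟨hEB.1, hBlAD, hEB.2.2⟩
      have add2 : H.angle E A D + H.angle D A C = H.angle E A C := by
        refine H.angle_add A E C D hAE hAC hAD ?_ ?_
        · intro n hAn hEn
          have hnl : n = lAE := line_eq' hAE hAn hEn hAlAE hElAE
          subst hnl
          exact ⟨hDC.1, hDC.2.1, hDC.2.2⟩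
        · intro n hAn hCn
          have hnl : n = l := line_eq' hAC hAn hCn hAl hCl
          subst hnl
          exact ⟨hD, hE, hDE.2.2⟩
      linarith
    · have hEC : H.SameSide lAD E C :=
        oppSide_trans hEB (oppSide_of_btw hAlAD hBlAD hClAD hBAC)
      have hDB : H.SameSide lAE D B :=
        side_swap hCl hAl hBl (H.btw_symm _ _ _ hBAC) hD hE hDE hAlAD hDlAD
          hAlAE hElAE hElAD hEC
      have add1 : H.angle C A E + H.angle E A D = H.angle C A D := by
        refine H.angle_add A C D E hAC hAD hAE ?_ ?_
        · intro n hAn hCn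
          have hnl : n = l := line_eq' hAC hAn hCn hAl hCl
          subst hnl
          exact ⟨hE, hD, fun ⟨Z, hZ, hb⟩ => hDE.2.2 ⟨Z, hZ, H.btw_symm _ _ _ hb⟩⟩
        · intro n hAn hDn
          have hnl : n = lAD := line_eq' hAD hAn hDn hAlAD hDlAD
          subst hnl
          exact ⟨hEC.1, hClAD, hEC.2.2⟩
      have add2 : H.angle E A D + H.angle D A B = H.angle E A B := by
        refine H.angle_add A E B D hAE hAB hAD ?_ ?_
        · intro n hAn hEn
          have hnl : n = lAE := line_eq' hAE hAn hEn hAlAE hElAE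
          subst hnl
          exact ⟨hDB.1, hDB.2.1, hDB.2.2⟩
        · intro n hAn hBn
          have hnl : n = l := line_eq' hAB hAn hBn hAl hBl
          subst hnl
          exact ⟨hD, hE, hDE.2.2⟩
      have s1 := H.angle_symm B A D
      have s2 := H.angle_symm C A D
      have s3 := H.angle_symm B A E
      have s4 := H.angle_symm C A E
      linarith

/-- Supplementary angles: if `B, A, C` are in a straight line then the two
angles at `A` on a ray `AD` sum to `π`. -/
theorem angle_supp {l : H.Line} {B A C D : H.Point}
    (hBl : H.onLine B l) (hAl : H.onLine A l) (hCl : H.onLine C l)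
    (hBAC : H.btw B A C) (hD : ¬ H.onLine D l) :
    H.angle B A D + H.angle D A C = Real.pi := by
  have hAB : A ≠ B := (btw_ne12 hBAC).symm
  have hAC : A ≠ C := btw_ne23 hBAC
  have hAD : A ≠ D := fun e => hD (e ▸ hAl)
  set S := H.angle B A D + H.angle D A C with hS
  have key : ∀ θ : ℝ, 0 < θ → θ < Real.pi → θ < S ∧ S ≤ θ + Real.pi := by
    intro θ h0 hπ
    obtain ⟨E, hEl, hcr, hEθ⟩ := H.angle_construct θ h0 hπ A B D l hAB hAl hBl hD
    have hDE : H.SameSide l D E :=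
      ⟨hD, hEl, fun ⟨Z, hZ, hb⟩ => hcr ⟨Z, hZ, H.btw_symm _ _ _ hb⟩⟩
    have hconst := angle_sum_const hBl hAl hCl hBAC hD hEl hDE
    have hBAE : H.angle B A E = θ := (H.angle_symm B A E).trans hEθ
    have hAE : A ≠ E := fun e => hEl (e ▸ hAl)
    have hpos : 0 < H.angle E A C := by
      refine H.angle_pos E A C ?_
      rintro n ⟨u, v, w⟩
      exact hEl ((line_eq' hAC v w hAl hCl) ▸ u)
    have hmem := H.angle_mem E A C hAE.symm hAC.symm
    exact ⟨by linarith, by linarith [hmem.2]⟩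
  have hpos1 : 0 < H.angle B A D := by
    refine H.angle_pos B A D ?_
    rintro n ⟨u, v, w⟩
    exact hD ((line_eq' hAB v u hAl hBl) ▸ w)
  have hpos2 : 0 < H.angle D A C := by
    refine H.angle_pos D A C ?_
    rintro n ⟨u, v, w⟩
    exact hD ((line_eq' hAC v w hAl hCl) ▸ u)
  have hmem1 := H.angle_mem B A D hAB.symm hAD.symm
  have hmem2 := H.angle_mem D A C hAD.symm hAC.symm
  have h1 : Real.pi ≤ S := by
    by_contra hn
    push_neg at hn
    have hk := key ((S + Real.pi) / 2) (by linarith) (by linarith)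
    linarith [hk.1]
  have h2 : S ≤ Real.pi := by
    by_contra hn
    push_neg at hn
    have hπ := Real.pi_pos
    have hk := key ((S - Real.pi) / 2) (by linarith)
      (by linarith [hmem1.2, hmem2.2])
    linarith [hk.2]
  linarith

/-- Vertical angles are equal. -/
theorem angle_vertical {l : H.Line} {B A C D D' : H.Point}
    (hBl : H.onLine B l) (hAl : H.onLine A l) (hCl : H.onLine C l)
    (h1 : H.btw B A C) (h2 : H.btw D A D') (hD : ¬ H.onLine D l) :
    H.angle B A D = H.angle C A D' := by
  have hAD : A ≠ D := fun e => hD (e ▸ hAl)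
  obtain ⟨lAD, hAlAD, hDlAD⟩ := H.line_exists A D hAD
  have hllAD : l ≠ lAD := fun e => hD (e ▸ hDlAD)
  have hD'lAD : H.onLine D' lAD := onLine_right h2 hDlAD hAlAD
  have hAD' : A ≠ D' := btw_ne23 h2
  have hD'l : ¬ H.onLine D' l := fun h => hllAD (line_eq' hAD' hAl h hAlAD hD'lAD)
  have hClAD : ¬ H.onLine C lAD :=
    fun h => (btw_ne23 h1) (eq_of_two_lines hllAD hCl h hAl hAlAD).symm
  have supp1 := angle_supp hBl hAl hCl h1 hD
  have supp2 := angle_supp hDlAD hAlAD hD'lAD h2 hClAD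
  linarith

/-- Uniqueness of angle transport: two rays on the same side of `l` making the
same angle with ray `AB` coincide. -/
theorem angle_unique {l : H.Line} {A B D E : H.Point}
    (hAl : H.onLine A l) (hBl : H.onLine B l) (hAB : A ≠ B)
    (hD : ¬ H.onLine D l) (hE : ¬ H.onLine E l) (hDE : H.SameSide l D E)
    (heq : H.angle B A D = H.angle B A E) : H.OnRay A D E := by
  obtain ⟨C, hC⟩ := H.btw_extend B A hAB.symm
  have hCl : H.onLine C l := onLine_right hC hBl hAl
  have hAC : A ≠ C := btw_ne23 hC
  have hAD : A ≠ D := fun e => hD (e ▸ hAl)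
  have hAE : A ≠ E := fun e => hE (e ▸ hAl)
  obtain ⟨lAD, hAlAD, hDlAD⟩ := H.line_exists A D hAD
  have hllAD : l ≠ lAD := fun e => hD (e ▸ hDlAD)
  have hBlAD : ¬ H.onLine B lAD := fun h => hD ((line_eq' hAB hAlAD h hAl hBl) ▸ hDlAD)
  have hClAD : ¬ H.onLine C lAD := fun h => hD ((line_eq' hAC hAlAD h hAl hCl) ▸ hDlAD)
  by_cases hElAD : H.onLine E lAD
  · exact onRay_of_sameSide hllAD hAl hAlAD hDlAD hElAD hDE
  exfalso
  have hposEAD : 0 < H.angle E A D := by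
    refine H.angle_pos E A D ?_
    rintro n ⟨u, v, w⟩
    exact hElAD ((line_eq' hAD v w hAlAD hDlAD) ▸ u)
  rcases side_cases hElAD hBlAD with hEB | hEB
  · have add1 : H.angle B A E + H.angle E A D = H.angle B A D := by
      refine H.angle_add A B D E hAB hAD hAE ?_ ?_
      · intro n hAn hBn
        have hnl : n = l := line_eq' hAB hAn hBn hAl hBl
        subst hnl
        exact ⟨hE, hD, fun ⟨Z, hZ, hb⟩ => hDE.2.2 ⟨Z, hZ, H.btw_symm _ _ _ hb⟩⟩
      · intro n hAn hDn
        have hnl : n = lAD := line_eq' hAD hAn hDn hAlAD hDlAD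
        subst hnl
        exact ⟨hEB.1, hBlAD, hEB.2.2⟩
    linarith
  · have hEC : H.SameSide lAD E C :=
      oppSide_trans hEB (oppSide_of_btw hAlAD hBlAD hClAD hC)
    have add1 : H.angle C A E + H.angle E A D = H.angle C A D := by
      refine H.angle_add A C D E hAC hAD hAE ?_ ?_
      · intro n hAn hCn
        have hnl : n = l := line_eq' hAC hAn hCn hAl hCl
        subst hnl
        exact ⟨hE, hD, fun ⟨Z, hZ, hb⟩ => hDE.2.2 ⟨Z, hZ, H.btw_symm _ _ _ hb⟩⟩
      · intro n hAn hDn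
        have hnl : n = lAD := line_eq' hAD hAn hDn hAlAD hDlAD
        subst hnl
        exact ⟨hEC.1, hClAD, hEC.2.2⟩
    have suppD := angle_supp hBl hAl hCl hC hD
    have suppE := angle_supp hBl hAl hCl hC hE
    have s2 := H.angle_symm C A D
    have s4 := H.angle_symm C A E
    linarith

end HilbertPlane
namespace HilbertPlane

variable {H : HilbertPlane}

/-- Exterior angle theorem (Euclid I.16): the exterior angle `∠ACD` of a
triangle exceeds the opposite interior angle `∠CAB`. -/
theorem ext_angle {A B C D : H.Point} {l : H.Line}
    (hBl : H.onLine B l) (hCl : H.onLine C l) (hBC : B ≠ C) (hAl : ¬ H.onLine A l)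
    (hD : H.btw B C D) : H.angle C A B < H.angle A C D := by
  have hAC : A ≠ C := fun e => hAl (e ▸ hCl)
  have hAB : A ≠ B := fun e => hAl (e ▸ hBl)
  have hDl : H.onLine D l := onLine_right hD hBl hCl
  have hCD : C ≠ D := btw_ne23 hD
  -- midpoint E of AC
  obtain ⟨E, hAEC, hd1, hd2⟩ := exists_midpoint hAC
  obtain ⟨m, hAm, hCm⟩ := H.line_exists A C hAC
  have hEm : H.onLine E m := onLine_mid hAEC hAm hCm
  have hBm : ¬ H.onLine B m := fun h => hAl ((line_eq' hBC h hCm hBl hCl) ▸ hAm)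
  have hEl : ¬ H.onLine E l := fun h =>
    (btw_ne23 hAEC) (eq_of_two_lines (fun e => hAl (e ▸ hAm) : l ≠ m) h hEm hCl hCm)
  have hEB : E ≠ B := fun e => hBm (e ▸ hEm)
  -- F beyond E on ray BE with EF = EB
  obtain ⟨F, hBEF, hdF⟩ := extend_dist hEB.symm (H.dist E B) (H.dist_pos E B hEB)
  obtain ⟨n, hBn, hEn⟩ := H.line_exists B E hEB.symm
  have hFn : H.onLine F n := onLine_right hBEF hBn hEn
  have hnm : n ≠ m := fun e => hBm (e ▸ hBn)
  have hEF : E ≠ F := btw_ne23 hBEF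
  have hFm : ¬ H.onLine F m := fun h => hEF (eq_of_two_lines hnm hFn h hEn hEm).symm
  have hln : l ≠ n := fun e => hEl (e ▸ hEn)
  have hlm : l ≠ m := fun e => hAl (e ▸ hAm)
  have hFl : ¬ H.onLine F l := fun h =>
    (btw_ne13 hBEF) (eq_of_two_lines hln hBl hBn h hFn)
  -- SAS for triangles EAB and ECF
  have noncol1 : ∀ k, ¬ (H.onLine E k ∧ H.onLine A k ∧ H.onLine B k) := by
    rintro k ⟨u, v, w⟩
    exact hBm ((line_eq' (btw_ne12 hAEC).symm u v hEm hAm) ▸ w)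
  have noncol2 : ∀ k, ¬ (H.onLine E k ∧ H.onLine C k ∧ H.onLine F k) := by
    rintro k ⟨u, v, w⟩
    exact hFm ((line_eq' (btw_ne23 hAEC) u v hEm hCm) ▸ w)
  have dEA_EC : H.dist E A = H.dist E C := by
    rw [H.dist_symm E A]; linarith
  have vert : H.angle A E B = H.angle C E F := angle_vertical hAm hEm hCm hAEC hBEF hBm
  have key := (H.sas E A B E C F noncol1 noncol2 dEA_EC hdF.symm vert).2.1
  -- F and D on the same side of line AC; F and A on the same side of BC
  have hDm : ¬ H.onLine D m := fun h => hCD (eq_of_two_lines hlm hDl h hCl hCm).symm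
  have sameFD : H.SameSide m F D :=
    oppSide_trans (oppSide_symm (oppSide_of_btw hEm hBm hFm hBEF))
      (oppSide_of_btw hCm hBm hDm hD)
  have sameFA : H.SameSide l F A :=
    sameSide_trans (sameSide_symm (sameSide_of_btw_endpoint hBl hFl hBEF))
      (sameSide_of_btw_endpoint hCl hAl (H.btw_symm _ _ _ hAEC))
  have hCF : C ≠ F := fun e => hFl (e ▸ hCl)
  have add : H.angle A C F + H.angle F C D = H.angle A C D := by
    refine H.angle_add C A D F hAC.symm hCD hCF ?_ ?_
    · intro k hCk hAk
      have hk : k = m := line_eq' hAC hAk hCk hAm hCm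
      subst hk
      exact ⟨sameFD.1, sameFD.2.1, sameFD.2.2⟩
    · intro k hCk hDk
      have hk : k = l := line_eq' hCD hCk hDk hCl hDl
      subst hk
      exact ⟨sameFA.1, sameFA.2.1, sameFA.2.2⟩
  have posFCD : 0 < H.angle F C D := by
    refine H.angle_pos F C D ?_
    rintro k ⟨u, v, w⟩
    exact hFl ((line_eq' hCD v w hCl hDl) ▸ u)
  have ray1 : H.angle C A B = H.angle E A B :=
    angle_ray_left (Or.inr (Or.inl hAEC))
  have ray2 : H.angle A C F = H.angle E C F :=
    angle_ray_left (Or.inr (Or.inl (H.btw_symm _ _ _ hAEC)))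
  linarith

/-- Two angles of a triangle sum to less than `π`. -/
theorem two_angles_lt {A B C : H.Point} {l : H.Line}
    (hBl : H.onLine B l) (hCl : H.onLine C l) (hBC : B ≠ C) (hAl : ¬ H.onLine A l) :
    H.angle A B C + H.angle A C B < Real.pi := by
  have hAC : A ≠ C := fun e => hAl (e ▸ hCl)
  obtain ⟨D, hD⟩ := H.btw_extend B C hBC
  have hDl : H.onLine D l := onLine_right hD hBl hCl
  obtain ⟨D', hD'⟩ := H.btw_extend A C hAC
  obtain ⟨m, hAm, hCm⟩ := H.line_exists A C hAC
  have hD'm : H.onLine D' m := onLine_right hD' hAm hCm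
  have hBm : ¬ H.onLine B m := fun h => hAl ((line_eq' hBC h hCm hBl hCl) ▸ hAm)
  -- I.16 applied to triangle with base AC
  have i16 : H.angle C B A < H.angle B C D' := ext_angle hAm hCm hAC hBm hD'
  -- vertical angles: ∠D'CB = ∠ACD
  have vert : H.angle D' C B = H.angle A C D :=
    angle_vertical hD'm hCm hAm (H.btw_symm _ _ _ hD') hD hBm
  -- supplementary: ∠BCA + ∠ACD = π
  have supp : H.angle B C A + H.angle A C D = Real.pi := angle_supp hBl hCl hDl hD hAl
  have s1 := H.angle_symm A B C
  have s2 := H.angle_symm B C D'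
  have s3 := H.angle_symm A C B
  linarith

end HilbertPlane
namespace HilbertPlane

variable {H : HilbertPlane}

/-- If `m` through `A` does not meet `l`, then the interior angles that the
transversal `AB` makes with `m` and `l` on either side sum to exactly `π`. -/
private lemma parallel_angle {l c m : H.Line} {A B Q : H.Point}
    (hA : ¬ H.onLine A l) (hBl : H.onLine B l) (hAc : H.onLine A c)
    (hBc : H.onLine B c) (hAB : A ≠ B) (hQl : H.onLine Q l) (hQc : ¬ H.onLine Q c)
    (hAm : H.onLine A m) (hml : ¬ H.LinesMeet m l) (hE5 : H.EuclidFifth) :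
    ∃ P, H.onLine P m ∧ ¬ H.onLine P c ∧ H.SameSide c P Q ∧
      H.angle P A B + H.angle Q B A = Real.pi := by
  have hcl : c ≠ l := fun e => hA (e ▸ hAc)
  have hQB : Q ≠ B := fun e => hQc (e ▸ hBc)
  have hBm : ¬ H.onLine B m := fun h => hml ⟨B, h, hBl⟩
  -- opposite point on l
  obtain ⟨Q', hQBQ'⟩ := H.btw_extend Q B hQB
  have hQ'l : H.onLine Q' l := onLine_right hQBQ' hQl hBl
  have hQ'c : ¬ H.onLine Q' c := fun h =>
    (btw_ne23 hQBQ') (eq_of_two_lines hcl h hQ'l hBc hBl).symm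
  have oppQQ' : H.OppSide c Q Q' := oppSide_of_btw hBc hQc hQ'c hQBQ'
  -- a point of m distinct from A, and its reflection through A
  have hP0ex : ∃ P0, H.onLine P0 m ∧ P0 ≠ A := by
    obtain ⟨X1, X2, h12, hX1, hX2⟩ := H.line_two_points m
    by_cases hX1A : X1 = A
    · exact ⟨X2, hX2, fun e => h12 (hX1A.trans e.symm)⟩
    · exact ⟨X1, hX1, hX1A⟩
  obtain ⟨P0, hP0m, hP0A⟩ := hP0ex
  have hcm : c ≠ m := by
    intro e
    exact hml ⟨B, e ▸ hBc, hBl⟩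
  have hP0c : ¬ H.onLine P0 c := fun h =>
    hP0A (eq_of_two_lines hcm h hP0m hAc hAm)
  obtain ⟨P1, hP01⟩ := H.btw_extend P0 A hP0A
  have hP1m : H.onLine P1 m := onLine_right hP01 hP0m hAm
  have hP1c : ¬ H.onLine P1 c := fun h =>
    (btw_ne23 hP01) (eq_of_two_lines hcm h hP1m hAc hAm).symm
  have oppP01 : H.OppSide c P0 P1 := oppSide_of_btw hAc hP0c hP1c hP01
  -- Euclid's postulate bounds the interior angle sums from below
  have claim : ∀ P Q0 : H.Point, H.onLine P m → H.onLine Q0 l → H.SameSide c P Q0 →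
      Real.pi ≤ H.angle P A B + H.angle Q0 B A := by
    intro P Q0 hPm hQ0l hside
    by_contra hn
    push_neg at hn
    obtain ⟨X, hXa, hXb, _⟩ := hE5 m l c A B P Q0 hAB hAm hAc hBl hBc hPm hQ0l hside hn
    exact hml ⟨X, hXa, hXb⟩
  -- choose the labels so that P is on Q's side
  have main : ∀ P P' : H.Point, H.onLine P m → H.onLine P' m → ¬ H.onLine P c →
      ¬ H.onLine P' c → H.btw P A P' → H.SameSide c P Q → H.SameSide c P' Q' →
      H.angle P A B + H.angle Q B A = Real.pi := by
    intro P P' hPm hP'm hPc hP'c hbtw hPQ hP'Q'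
    have ge1 := claim P Q hPm hQl hPQ
    have ge2 := claim P' Q' hP'm hQ'l hP'Q'
    have suppA : H.angle P A B + H.angle B A P' = Real.pi :=
      angle_supp hPm hAm hP'm hbtw hBm
    have suppB : H.angle Q B A + H.angle A B Q' = Real.pi :=
      angle_supp hQl hBl hQ'l hQBQ' hA
    have s1 := H.angle_symm B A P'
    have s2 := H.angle_symm A B Q'
    linarith
  rcases side_cases hP0c hQc with hPQ | hPQ
  · have hP1Q' : H.SameSide c P1 Q' :=
      oppSide_trans (oppSide_symm (sameSide_oppSide_trans (sameSide_symm hPQ) oppP01))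
        oppQQ'
    exact ⟨P0, hP0m, hP0c, hPQ, main P0 P1 hP0m hP1m hP0c hP1c hP01 hPQ hP1Q'⟩
  · have hP1Q : H.SameSide c P1 Q := oppSide_trans (oppSide_symm oppP01) hPQ
    have hP0Q' : H.SameSide c P0 Q' := oppSide_trans hPQ oppQQ'
    exact ⟨P1, hP1m, hP1c, hP1Q,
      main P1 P0 hP1m hP0m hP1c hP0c (H.btw_symm _ _ _ hP01) hP1Q hP0Q'⟩

/-- Euclid's Fifth Postulate implies Playfair's axiom. -/
theorem playfair_of_euclidFifth (hE5 : H.EuclidFifth) : H.PlayfairAx := by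
  intro l A hA m n hm hn hml hnl
  obtain ⟨B, Q, hBQ, hBl, hQl⟩ := H.line_two_points l
  have hAB : A ≠ B := fun e => hA (e ▸ hBl)
  obtain ⟨c, hAc, hBc⟩ := H.line_exists A B hAB
  have hQc : ¬ H.onLine Q c := fun h =>
    hA ((line_eq' hBQ hBc h hBl hQl) ▸ hAc)
  obtain ⟨P, hPm, hPc, hPQ, e1⟩ :=
    parallel_angle hA hBl hAc hBc hAB hQl hQc hm hml hE5
  obtain ⟨R, hRn, hRc, hRQ, e2⟩ :=
    parallel_angle hA hBl hAc hBc hAB hQl hQc hn hnl hE5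
  have heq : H.angle B A P = H.angle B A R := by
    have s1 := H.angle_symm B A P
    have s2 := H.angle_symm B A R
    linarith
  have hray : H.OnRay A P R :=
    angle_unique hAc hBc hAB hPc hRc (sameSide_trans hPQ (sameSide_symm hRQ)) heq
  have hRm : H.onLine R m := onLine_of_onRay hray hm hPm
  have hAR : A ≠ R := fun e => hRc (e ▸ hAc)
  exact line_eq' hAR hm hRm hn hRn

/-- Playfair's axiom implies Euclid's Fifth Postulate. -/
theorem euclidFifth_of_playfair (hP : H.PlayfairAx) : H.EuclidFifth := by
  intro a b c A B P Q hAB hAa hAc hBb hBc hPa hQb hPQ hsum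
  have hPc : ¬ H.onLine P c := hPQ.1
  have hQc : ¬ H.onLine Q c := hPQ.2.1
  have hPA : P ≠ A := fun e => hPc (e ▸ hAc)
  have hQB : Q ≠ B := fun e => hQc (e ▸ hBc)
  have hac : a ≠ c := fun e => hPc (e ▸ hPa)
  have hbc : b ≠ c := fun e => hQc (e ▸ hQb)
  have hAb : ¬ H.onLine A b := fun h => hQc ((line_eq' hAB h hBb hAc hBc) ▸ hQb)
  have hBa : ¬ H.onLine B a := fun h => hPc ((line_eq' hAB hAa h hAc hBc) ▸ hPa)
  -- the interior angles
  have hposα : 0 < H.angle P A B := by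
    refine H.angle_pos P A B ?_
    rintro k ⟨u, v, w⟩
    exact hPc ((line_eq' hAB v w hAc hBc) ▸ u)
  have hposβ : 0 < H.angle Q B A := by
    refine H.angle_pos Q B A ?_
    rintro k ⟨u, v, w⟩
    exact hQc ((line_eq' hAB.symm v w hBc hAc) ▸ u)
  have hβlt : H.angle Q B A < Real.pi := by
    have := H.angle_mem P A B hPA (fun e : B = A => hAB e.symm)
    linarith [this.1]
  -- reflect P through A
  obtain ⟨Pm, hPAPm⟩ := H.btw_extend P A hPA
  have hPma : H.onLine Pm a := onLine_right hPAPm hPa hAa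
  have hPmc : ¬ H.onLine Pm c := fun h =>
    (btw_ne23 hPAPm) (eq_of_two_lines hac.symm h hPma hAc hAa).symm
  have oppPPm : H.OppSide c P Pm := oppSide_of_btw hAc hPc hPmc hPAPm
  -- construct the alternate-angle ray AR on the other side
  obtain ⟨R, hRc, hcr, hRAB⟩ :=
    H.angle_construct (H.angle Q B A) hposβ hβlt A B Pm c hAB hAc hBc hPmc
  have hRPm : H.SameSide c R Pm := ⟨hRc, hPmc, hcr⟩
  have hAR : A ≠ R := fun e => hRc (e ▸ hAc)
  obtain ⟨m', hAm', hRm'⟩ := H.line_exists A R hAR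
  have hcm' : c ≠ m' := fun e => hRc (e ▸ hRm')
  have hBm' : ¬ H.onLine B m' := fun h => hRc ((line_eq' hAB hAm' h hAc hBc) ▸ hRm')
  have oppRP : H.OppSide c R P := sameSide_oppSide_trans hRPm (oppSide_symm oppPPm)
  have oppRQ : H.OppSide c R Q :=
    oppSide_symm (sameSide_oppSide_trans (sameSide_symm hPQ) (oppSide_symm oppRP))
  -- the line AR does not meet b
  have hm'b : ¬ H.LinesMeet m' b := by
    rintro ⟨X, hXm', hXb⟩
    have hXc : ¬ H.onLine X c := fun h =>
      hAb ((eq_of_two_lines hcm' h hXm' hAc hAm') ▸ hXb)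
    rcases side_cases hXc hRc with hXR | hXR
    · have hray : H.OnRay A R X :=
        onRay_of_sameSide hcm' hAc hAm' hRm' hXm' (sameSide_symm hXR)
      have hang : H.angle R A B = H.angle X A B := angle_ray_left hray
      have oppXQ : H.OppSide c X Q := sameSide_oppSide_trans hXR oppRQ
      have hbtw : H.btw X B Q := btw_of_oppSide hbc.symm hBc hBb hXb hQb oppXQ
      have supp : H.angle X B A + H.angle A B Q = Real.pi :=
        angle_supp hXb hBb hQb hbtw hAb
      have two : H.angle X A B + H.angle X B A < Real.pi :=
        two_angles_lt hAc hBc hAB hXc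
      have s := H.angle_symm A B Q
      linarith [hRAB]
    · have hbtw : H.btw X A R := btw_of_oppSide hcm' hAc hAm' hXm' hRm' hXR
      have supp : H.angle X A B + H.angle B A R = Real.pi :=
        angle_supp hXm' hAm' hRm' hbtw hBm'
      have sameXQ : H.SameSide c X Q := oppSide_trans hXR oppRQ
      have hray : H.OnRay B Q X :=
        onRay_of_sameSide hbc.symm hBc hBb hQb hXb (sameSide_symm sameXQ)
      have hang : H.angle Q B A = H.angle X B A := angle_ray_left hray
      have two : H.angle X A B + H.angle X B A < Real.pi :=
        two_angles_lt hAc hBc hAB hXc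
      have s := H.angle_symm B A R
      linarith [hRAB]
  -- a is different from AR
  have ham' : a ≠ m' := by
    intro e
    have hPm' : H.onLine P m' := e ▸ hPa
    rcases side_cases hPc hRc with hPR | hPR
    · exact hPR.2.2 (sameSide_oppSide_trans hPQ (oppSide_symm oppRQ)).2.2
    · have hbtw : H.btw P A R := btw_of_oppSide hcm' hAc hAm' hPm' hRm' hPR
      have supp : H.angle P A B + H.angle B A R = Real.pi :=
        angle_supp hPm' hAm' hRm' hbtw hBm'
      have s := H.angle_symm B A R
      linarith [hRAB]
  -- by Playfair, a must meet b
  have hmeet : H.LinesMeet a b := by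
    by_contra hn
    exact ham' (hP b A hAb a m' hAa hAm' hn hm'b)
  obtain ⟨X, hXa, hXb⟩ := hmeet
  have hXc : ¬ H.onLine X c := by
    intro h
    have h1 : X = A := eq_of_two_lines hac hXa h hAa hAc
    have h2 : X = B := eq_of_two_lines hbc hXb h hBb hBc
    exact hAB (h1.symm.trans h2)
  rcases side_cases hXc hPc with hXP | hXP
  · exact ⟨X, hXa, hXb, hXP⟩
  · exfalso
    have hbtwA : H.btw X A P := btw_of_oppSide hac.symm hAc hAa hXa hPa hXP
    have suppA : H.angle X A B + H.angle B A P = Real.pi :=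
      angle_supp hXa hAa hPa hbtwA hBa
    have oppXQ : H.OppSide c X Q :=
      oppSide_symm (sameSide_oppSide_trans (sameSide_symm hPQ) (oppSide_symm hXP))
    have hbtwB : H.btw X B Q := btw_of_oppSide hbc.symm hBc hBb hXb hQb oppXQ
    have suppB : H.angle X B A + H.angle A B Q = Real.pi :=
      angle_supp hXb hBb hQb hbtwB hAb
    have two : H.angle X A B + H.angle X B A < Real.pi :=
      two_angles_lt hAc hBc hAB hXc
    have s1 := H.angle_symm B A P
    have s2 := H.angle_symm A B Q
    linarith

end HilbertPlane

/-- In any Hilbert plane, Playfair's axiom is equivalent to Euclid's Fifth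
Postulate. -/
theorem playfair_iff_euclidFifth (H : HilbertPlane) :
    H.PlayfairAx ↔ H.EuclidFifth :=
  ⟨HilbertPlane.euclidFifth_of_playfair, HilbertPlane.playfair_of_euclidFifth⟩
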